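/- Let n, k, r be positive integers with 2k ≤ n. Let X be a (k−1)-wise independent random variable on {0,1}^n with normalized density f(x) = 2^n·Pr(X = x). Suppose d : {0,1}^n → ℝ≥0 satisfies E[d] = 1, d is supported on the Hamming ball B_r of radius r around 0^n, and (Ad)(x) ≥ (n − 2k + 1)·d(x) for all x, where A is the adjacency operator of the Hamming graph. Then g = f ∗ d satisfies E[g²] ≤ n. -/

import Mathlib

open Finset

/-- `p` is the probability mass function of a `k`-wise independent random variable
taking values in `{0,1}^n`. -/
def KWiseIndep (n k : ℕ) (p : (Fin n → Bool) → ℝ) : Prop :=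
  ∀ S : Finset (Fin n), S.card ≤ k → ∀ a : Fin n → Bool,
    (∑ x ∈ Finset.univ.filter fun x => ∀ i ∈ S, x i = a i, p x) = (1 / 2 : ℝ) ^ S.card

/-- The adjacency operator of the Hamming graph on `{0,1}^n`. -/
def adjOp {n : ℕ} (f : (Fin n → Bool) → ℝ) (x : Fin n → Bool) : ℝ :=
  ∑ y ∈ Finset.univ.filter fun y => hammingDist x y = 1, f y

/-- Convolution on `{0,1}^n`: `(f ∗ d)(x) = E_y[f(y)·d(x ⊕ y)]`, `y` uniform. -/
noncomputable def cubeConv {n : ℕ} (f d : (Fin n → Bool) → ℝ) (x : Fin n → Bool) : ℝ :=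
  (∑ y, f y * d fun i => xor (x i) (y i)) / 2 ^ n

/-- Hamming weight of `x ∈ {0,1}^n`. -/
def hWt {n : ℕ} (x : Fin n → Bool) : ℕ := (Finset.univ.filter fun i => x i = true).card

section Helpers
variable {n : ℕ}

def xorf (x y : Fin n → Bool) : Fin n → Bool := fun i => xor (x i) (y i)

lemma xorf_invol (y : Fin n → Bool) : Function.Involutive (fun x => xorf x y) := by
  intro x; funext j; simp [xorf, Bool.xor_assoc]

def eo (i : Fin n) : Fin n → Bool := fun j => decide (j = i)

noncomputable def chi (S : Finset (Fin n)) (x : Fin n → Bool) : ℝ :=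
  ∏ i ∈ S, (if x i then (-1 : ℝ) else 1)

lemma chi_xorf (S : Finset (Fin n)) (x y : Fin n → Bool) :
    chi S (xorf x y) = chi S x * chi S y := by
  unfold chi xorf
  rw [← Finset.prod_mul_distrib]
  refine Finset.prod_congr rfl fun i _ => ?_
  cases hx : x i <;> cases hy : y i <;> norm_num

lemma chi_mul_self (S : Finset (Fin n)) (x : Fin n → Bool) : chi S x * chi S x = 1 := by
  unfold chi
  rw [← Finset.prod_mul_distrib]
  refine Finset.prod_eq_one fun i _ => ?_
  cases hx : x i <;> norm_num

lemma abs_chi (S : Finset (Fin n)) (x : Fin n → Bool) : |chi S x| = 1 := by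
  unfold chi
  rw [Finset.abs_prod]
  refine Finset.prod_eq_one fun i _ => ?_
  cases hx : x i <;> norm_num

lemma chi_eo (S : Finset (Fin n)) (i : Fin n) :
    chi S (eo i) = if i ∈ S then -1 else 1 := by
  unfold chi eo
  simp only [decide_eq_true_eq]
  rw [Finset.prod_ite_eq' S i (fun _ => (-1 : ℝ))]

lemma chi_empty (x : Fin n → Bool) : chi (∅ : Finset (Fin n)) x = 1 := by
  simp [chi]

-- sum over a flip-closed set of chi vanishes
lemma sum_chi_closed {S : Finset (Fin n)} {i : Fin n} (hi : i ∈ S)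
    (X : Finset (Fin n → Bool)) (hX : ∀ a ∈ X, xorf a (eo i) ∈ X) :
    ∑ a ∈ X, chi S a = 0 := by
  classical
  refine Finset.sum_involution (fun a _ => xorf a (eo i)) ?_ ?_ hX ?_
  · intro a ha
    rw [chi_xorf, chi_eo, if_pos hi]
    ring
  · intro a ha hne
    intro h
    have := congrFun h i
    simp [xorf, eo] at this
  · intro a ha
    exact xorf_invol (eo i) a

lemma sum_chi (S : Finset (Fin n)) :
    ∑ x : Fin n → Bool, chi S x = if S = ∅ then (2 : ℝ) ^ n else 0 := by
  classical
  rcases eq_or_ne S ∅ with rfl | hS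
  · simp [chi]
  · rw [if_neg hS]
    obtain ⟨i, hi⟩ := Finset.nonempty_iff_ne_empty.2 hS
    exact sum_chi_closed hi Finset.univ (fun a _ => Finset.mem_univ _)

lemma sum_chi_dual (x y : Fin n → Bool) :
    ∑ S : Finset (Fin n), chi S x * chi S y = if x = y then (2 : ℝ) ^ n else 0 := by
  classical
  have h1 : ∀ S : Finset (Fin n), chi S x * chi S y = chi S (xorf x y) := by
    intro S; rw [chi_xorf]
  simp only [h1]
  have h2 : ∑ S : Finset (Fin n), chi S (xorf x y)
      = ∏ i : Fin n, ((if xorf x y i then (-1 : ℝ) else 1) + 1) := by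
    rw [Finset.prod_add]
    rw [Finset.powerset_univ]
    refine (Finset.sum_congr rfl fun S _ => ?_).symm
    simp [chi]
  rw [h2]
  rcases eq_or_ne x y with rfl | hxy
  · rw [if_pos rfl]
    have : ∀ i : Fin n, xorf x x i = false := by intro i; simp [xorf]
    simp only [this]
    norm_num
  · rw [if_neg hxy]
    have : ∃ i, xorf x y i = true := by
      by_contra h
      push_neg at h
      apply hxy
      funext j
      have := h j
      simp [xorf] at this
      cases hx : x j <;> cases hy : y j <;> simp_all [xorf]
    obtain ⟨i, hi⟩ := this
    apply Finset.prod_eq_zero (Finset.mem_univ i)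
    rw [hi]; norm_num

noncomputable def fc (g : (Fin n → Bool) → ℝ) (S : Finset (Fin n)) : ℝ :=
  (∑ x, g x * chi S x) / 2 ^ n

-- reindexing by xor
lemma sum_xorf (F : (Fin n → Bool) → ℝ) (y : Fin n → Bool) :
    ∑ x, F (xorf x y) = ∑ x, F x := by
  exact Equiv.sum_comp ((xorf_invol y).toPerm _) F

lemma plancherel (g h : (Fin n → Bool) → ℝ) :
    ∑ S : Finset (Fin n), fc g S * fc h S = (∑ x, g x * h x) / 2 ^ n := by
  classical
  have hN : ((2 : ℝ) ^ n) ≠ 0 := by positivity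
  unfold fc
  have step : ∀ S : Finset (Fin n),
      (∑ x, g x * chi S x) / 2 ^ n * ((∑ x, h x * chi S x) / 2 ^ n)
      = (∑ x, ∑ y, g x * h y * (chi S x * chi S y)) / ((2:ℝ) ^ n * 2 ^ n) := by
    intro S
    rw [div_mul_div_comm, Finset.sum_mul_sum]
    congr 1
    refine Finset.sum_congr rfl fun x _ => Finset.sum_congr rfl fun y _ => by ring
  simp only [step, ← Finset.sum_div]
  rw [Finset.sum_comm]
  have inner : ∀ x : Fin n → Bool,
      (∑ S : Finset (Fin n), ∑ y, g x * h y * (chi S x * chi S y))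
      = g x * h x * 2 ^ n := by
    intro x
    rw [Finset.sum_comm]
    have : ∀ y : Fin n → Bool,
        (∑ S : Finset (Fin n), g x * h y * (chi S x * chi S y))
        = g x * h y * (if x = y then (2:ℝ)^n else 0) := by
      intro y
      rw [← Finset.mul_sum, sum_chi_dual]
    simp only [this, mul_ite, mul_zero]
    rw [Finset.sum_ite_eq (Finset.univ) x (fun y => g x * h y * (2:ℝ)^n)]
    simp
  simp only [inner]
  rw [← Finset.sum_mul]
  field_simp

lemma adj_eq (g : (Fin n → Bool) → ℝ) (x : Fin n → Bool) :
    adjOp g x = ∑ i : Fin n, g (xorf x (eo i)) := by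
  classical
  have hset : (Finset.univ.filter fun y => hammingDist x y = 1)
      = Finset.univ.image (fun i => xorf x (eo i)) := by
    ext y
    simp only [Finset.mem_filter, Finset.mem_univ, true_and, Finset.mem_image]
    constructor
    · intro hy
      have hy' : ({i | x i ≠ y i} : Finset (Fin n)).card = 1 := hy
      obtain ⟨i, hi⟩ := Finset.card_eq_one.1 hy'
      refine ⟨i, funext fun j => ?_⟩
      by_cases hj : j = i
      · subst hj
        have : j ∈ ({i | x i ≠ y i} : Finset (Fin n)) := by rw [hi]; exact Finset.mem_singleton_self _
        simp only [Finset.mem_filter] at this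
        have hne : x j ≠ y j := by simpa using this
        simp only [xorf, eo]
        cases hx : x j <;> cases hyy : y j <;> simp_all
      · have : j ∉ ({i | x i ≠ y i} : Finset (Fin n)) := by rw [hi]; simpa using hj
        have heq : x j = y j := by
          by_contra hne
          exact this (by simpa using hne)
        simp only [xorf, eo]
        rw [decide_eq_false hj]
        cases hx : x j <;> simp_all
    · rintro ⟨i, -, rfl⟩
      show ({j | x j ≠ xorf x (eo i) j} : Finset (Fin n)).card = 1
      have : ({j | x j ≠ xorf x (eo i) j} : Finset (Fin n)) = {i} := by
        ext j
        rw [Finset.mem_filter]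
        simp only [Finset.mem_singleton, Finset.mem_filter, Finset.mem_univ, true_and, xorf, eo]
        cases hx : x j <;> by_cases hj : j = i <;> simp [hj]
      rw [this, Finset.card_singleton]
  rw [adjOp, hset, Finset.sum_image]
  intro i _ i' _ h
  have := congrFun h i
  simp only [xorf, eo] at this
  have : decide (i = i) = decide (i = i') := by
    cases hx : x i <;> simp_all
  simpa using this.symm

lemma cubeConv_eq (f d : (Fin n → Bool) → ℝ) (x : Fin n → Bool) :
    cubeConv f d x = (∑ y, f y * d (xorf x y)) / 2 ^ n := rfl

lemma fc_conv (f d : (Fin n → Bool) → ℝ) (S : Finset (Fin n)) :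
    fc (cubeConv f d) S = fc f S * fc d S := by
  classical
  have hN : ((2:ℝ) ^ n) ≠ 0 := by positivity
  have expand : (∑ x, cubeConv f d x * chi S x)
      = ((∑ y, f y * chi S y) * ∑ z, d z * chi S z) / 2 ^ n := by
    have hc : ∀ x : Fin n → Bool, cubeConv f d x * chi S x
        = (∑ y, f y * d (xorf x y) * chi S x) / 2 ^ n := by
      intro x
      rw [cubeConv_eq, div_mul_eq_mul_div, Finset.sum_mul]
    simp only [hc, ← Finset.sum_div]
    congr 1
    rw [Finset.sum_comm]
    have inner : ∀ y : Fin n → Bool,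
        (∑ x, f y * d (xorf x y) * chi S x) = f y * chi S y * ∑ z, d z * chi S z := by
      intro y
      have hrw : ∀ x : Fin n → Bool, f y * d (xorf x y) * chi S x
          = f y * (d (xorf x y) * (chi S (xorf x y) * chi S y)) := by
        intro x
        have h2 : xorf (xorf x y) y = x := xorf_invol y x
        have h1 : chi S x = chi S (xorf x y) * chi S y := by
          conv_lhs => rw [← h2]
          rw [chi_xorf]
        rw [h1]; ring
      calc ∑ x, f y * d (xorf x y) * chi S x
          = ∑ x, f y * (d (xorf x y) * (chi S (xorf x y) * chi S y)) :=
            Finset.sum_congr rfl fun x _ => hrw x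
        _ = ∑ z, f y * (d z * (chi S z * chi S y)) :=
            sum_xorf (fun w => f y * (d w * (chi S w * chi S y))) y
        _ = f y * chi S y * ∑ z, d z * chi S z := by
            rw [Finset.mul_sum]
            exact Finset.sum_congr rfl fun z _ => by ring
    simp only [inner]
    rw [← Finset.sum_mul]
  unfold fc
  rw [expand]
  field_simp

lemma fc_adjOp (g : (Fin n → Bool) → ℝ) (S : Finset (Fin n)) :
    fc (adjOp g) S = ((n : ℝ) - 2 * S.card) * fc g S := by
  classical
  unfold fc
  rw [← mul_div_assoc]
  congr 1
  simp only [adj_eq, Finset.sum_mul]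
  rw [Finset.sum_comm]
  have inner : ∀ i : Fin n,
      (∑ x, g (xorf x (eo i)) * chi S x)
        = (if i ∈ S then (-1:ℝ) else 1) * ∑ z, g z * chi S z := by
    intro i
    have hrw : ∀ x : Fin n → Bool, g (xorf x (eo i)) * chi S x
        = g (xorf x (eo i)) * chi S (xorf x (eo i)) * chi S (eo i) := by
      intro x
      have h2 : xorf (xorf x (eo i)) (eo i) = x := xorf_invol (eo i) x
      have h1 : chi S x = chi S (xorf x (eo i)) * chi S (eo i) := by
        conv_lhs => rw [← h2]
        rw [chi_xorf]
      rw [h1]; ring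
    calc ∑ x, g (xorf x (eo i)) * chi S x
        = ∑ x, g (xorf x (eo i)) * chi S (xorf x (eo i)) * chi S (eo i) :=
          Finset.sum_congr rfl fun x _ => hrw x
      _ = ∑ z, g z * chi S z * chi S (eo i) :=
          sum_xorf (fun w => g w * chi S w * chi S (eo i)) (eo i)
      _ = (if i ∈ S then (-1:ℝ) else 1) * ∑ z, g z * chi S z := by
          rw [← Finset.sum_mul, chi_eo]
          ring
  simp only [inner]
  rw [← Finset.sum_mul]
  congr 1
  have h1 : ∀ i : Fin n, (if i ∈ S then (-1:ℝ) else 1)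
      = 1 - 2 * (if i ∈ S then (1:ℝ) else 0) := by
    intro i; split <;> norm_num
  simp only [h1]
  rw [Finset.sum_sub_distrib, Finset.sum_const, ← Finset.mul_sum]
  simp [Finset.sum_ite_mem]

lemma fc_density' (p : (Fin n → Bool) → ℝ) (S : Finset (Fin n)) :
    fc (fun x => 2 ^ n * p x) S = ∑ x, p x * chi S x := by
  unfold fc
  have hN : ((2:ℝ) ^ n) ≠ 0 := by positivity
  rw [div_eq_iff hN, Finset.sum_mul]
  exact Finset.sum_congr rfl fun x _ => by ring

lemma fc_density_abs (p : (Fin n → Bool) → ℝ) (hp0 : ∀ x, 0 ≤ p x)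
    (hp1 : ∑ x, p x = 1) (S : Finset (Fin n)) :
    |fc (fun x => 2 ^ n * p x) S| ≤ 1 := by
  rw [fc_density', ← hp1]
  refine (Finset.abs_sum_le_sum_abs _ _).trans ?_
  refine Finset.sum_le_sum fun x _ => ?_
  rw [abs_mul, abs_chi, mul_one, abs_of_nonneg (hp0 x)]

lemma fc_density_empty (p : (Fin n → Bool) → ℝ) (hp1 : ∑ x, p x = 1) :
    fc (fun x => 2 ^ n * p x) (∅ : Finset (Fin n)) = 1 := by
  rw [fc_density']
  simp only [chi_empty, mul_one, hp1]

lemma fc_density_vanish (k : ℕ) (p : (Fin n → Bool) → ℝ)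
    (hindep : KWiseIndep n k p) (S : Finset (Fin n)) (hS : S ≠ ∅) (hcard : S.card ≤ k) :
    fc (fun x => 2 ^ n * p x) S = 0 := by
  classical
  rw [fc_density']
  obtain ⟨i, hi⟩ := Finset.nonempty_iff_ne_empty.2 hS
  set φ : (Fin n → Bool) → (Fin n → Bool) := fun x j => if j ∈ S then x j else false with hφ
  have hfib : ∑ a : Fin n → Bool, ∑ x ∈ Finset.univ.filter fun x => φ x = a, p x * chi S x
      = ∑ x, p x * chi S x := Finset.sum_fiberwise _ _ _
  rw [← hfib]
  have hterm : ∀ a : Fin n → Bool,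
      (∑ x ∈ Finset.univ.filter fun x => φ x = a, p x * chi S x)
      = (if φ a = a then chi S a * (1/2 : ℝ) ^ S.card else 0) := by
    intro a
    by_cases ha : φ a = a
    · rw [if_pos ha]
      have hset : (Finset.univ.filter fun x => φ x = a)
          = Finset.univ.filter fun x => ∀ i ∈ S, x i = a i := by
        ext x
        simp only [Finset.mem_filter, Finset.mem_univ, true_and]
        constructor
        · intro h j hj
          have := congrFun h j
          simpa [hφ, hj] using this
        · intro h
          funext j
          by_cases hj : j ∈ S
          · simp [hφ, hj, h j hj]
          · have : a j = false := by
              have := congrFun ha j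
              simpa [hφ, hj] using this
            simp [hφ, hj, this]
      have hchi : ∀ x ∈ Finset.univ.filter fun x => φ x = a, p x * chi S x = p x * chi S a := by
        intro x hx
        simp only [Finset.mem_filter, Finset.mem_univ, true_and] at hx
        congr 1
        unfold chi
        refine Finset.prod_congr rfl fun j hj => ?_
        have := congrFun hx j
        simp only [hφ, hj, if_pos] at this
        rw [this]
      rw [Finset.sum_congr rfl hchi, ← Finset.sum_mul, hset, hindep S hcard a]
      ring
    · rw [if_neg ha]
      apply Finset.sum_eq_zero
      intro x hx
      simp only [Finset.mem_filter, Finset.mem_univ, true_and] at hx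
      exfalso
      apply ha
      funext j
      have h1 := congrFun hx j
      simp only [hφ] at h1 ⊢
      by_cases hj : j ∈ S
      · simp [hj]
      · rw [if_neg hj] at h1 ⊢
        exact h1
  rw [Finset.sum_congr rfl fun a _ => hterm a]
  rw [Finset.sum_ite, Finset.sum_const]
  simp only [smul_zero, add_zero]
  rw [← Finset.sum_mul]
  have hclosed : ∑ a ∈ Finset.univ.filter fun a => φ a = a, chi S a = 0 := by
    refine sum_chi_closed hi _ ?_
    intro a ha
    simp only [Finset.mem_filter, Finset.mem_univ, true_and] at ha ⊢
    funext j
    by_cases hj : j ∈ S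
    · simp [hφ, hj]
    · have haj : a j = false := by
        have := congrFun ha j
        simpa [hφ, hj] using this
      have hji : j ≠ i := fun h => hj (h ▸ hi)
      simp [hφ, hj, xorf, eo, haj, hji]
  rw [hclosed, zero_mul]

lemma xorf_right_comm (x y z : Fin n → Bool) : xorf (xorf x y) z = xorf (xorf x z) y := by
  funext j
  simp only [xorf]
  cases x j <;> cases y j <;> cases z j <;> rfl


end Helpers

/-- If `X` is `(k−1)`-wise independent with normalized density `f`, and `d ≥ 0` has
`E[d] = 1`, is supported on the Hamming ball of radius `r` around `0`, and satisfies
`Ad ≥ (n − 2k + 1)·d` pointwise, then `g = f ∗ d` has `E[g²] ≤ n`. -/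
theorem second_moment_of_conv (n k r : ℕ) (hn : 0 < n) (hk : 0 < k) (hr : 0 < r)
    (hkn : 2 * k ≤ n)
    (p : (Fin n → Bool) → ℝ) (hp0 : ∀ x, 0 ≤ p x) (hp1 : ∑ x, p x = 1)
    (hindep : KWiseIndep n (k - 1) p)
    (d : (Fin n → Bool) → ℝ) (hd0 : ∀ x, 0 ≤ d x)
    (hdE : (∑ x, d x) / 2 ^ n = 1)
    (hdsupp : ∀ x, d x ≠ 0 → hWt x ≤ r)
    (hAd : ∀ x, adjOp d x ≥ ((n : ℝ) - 2 * k + 1) * d x) :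
    (∑ x, (cubeConv (fun x => 2 ^ n * p x) d x) ^ 2) / 2 ^ n ≤ (n : ℝ) := by
  classical
  have hN : (0:ℝ) < 2 ^ n := by positivity
  set f : (Fin n → Bool) → ℝ := fun x => 2 ^ n * p x with hf
  set g : (Fin n → Bool) → ℝ := cubeConv f d with hg
  have hf0 : ∀ x, 0 ≤ f x := fun x => by
    have := hp0 x; positivity
  have hg0 : ∀ x, 0 ≤ g x := by
    intro x
    rw [hg, cubeConv_eq]
    apply div_nonneg _ (le_of_lt hN)
    exact Finset.sum_nonneg fun y _ => mul_nonneg (hf0 y) (hd0 _)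
  -- adjOp commutes with convolution
  have hcomm : ∀ x, adjOp g x = (∑ y, f y * adjOp d (xorf x y)) / 2 ^ n := by
    intro x
    rw [adj_eq]
    have h1 : ∀ i : Fin n, g (xorf x (eo i))
        = (∑ y, f y * d (xorf (xorf x y) (eo i))) / 2 ^ n := by
      intro i
      rw [hg, cubeConv_eq]
      congr 1
      refine Finset.sum_congr rfl fun y _ => ?_
      rw [xorf_right_comm x (eo i) y]
    simp only [h1, ← Finset.sum_div]
    congr 1
    rw [Finset.sum_comm]
    refine Finset.sum_congr rfl fun y _ => ?_
    rw [adj_eq, Finset.mul_sum]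
  -- pointwise eigenvalue inequality for g
  have hpt : ∀ x, ((n:ℝ) - 2 * k + 1) * g x ≤ adjOp g x := by
    intro x
    rw [hcomm x, hg, cubeConv_eq, mul_div_assoc']
    have hnum : ((n:ℝ) - 2 * k + 1) * ∑ y, f y * d (xorf x y)
        ≤ ∑ y, f y * adjOp d (xorf x y) := by
      rw [Finset.mul_sum]
      refine Finset.sum_le_sum fun y _ => ?_
      calc ((n:ℝ) - 2 * k + 1) * (f y * d (xorf x y))
          = f y * (((n:ℝ) - 2 * k + 1) * d (xorf x y)) := by ring
        _ ≤ f y * adjOp d (xorf x y) := mul_le_mul_of_nonneg_left (hAd _) (hf0 y)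
    exact div_le_div_of_nonneg_right hnum hN.le
  -- spectral inequality
  have h1 : ((n:ℝ) - 2 * k + 1) * ∑ x, g x ^ 2 ≤ ∑ x, g x * adjOp g x := by
    rw [Finset.mul_sum]
    refine Finset.sum_le_sum fun x _ => ?_
    calc ((n:ℝ) - 2 * k + 1) * g x ^ 2
        = g x * (((n:ℝ) - 2 * k + 1) * g x) := by ring
      _ ≤ g x * adjOp g x := mul_le_mul_of_nonneg_left (hpt x) (hg0 x)
  have hpars : ∑ S : Finset (Fin n), (fc g S) ^ 2 = (∑ x, g x ^ 2) / 2 ^ n := by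
    have := plancherel g g
    simp only [← pow_two] at this
    exact this
  have hAg : ∑ S : Finset (Fin n), fc g S * fc (adjOp g) S
      = ∑ S : Finset (Fin n), ((n:ℝ) - 2 * (S.card:ℝ)) * (fc g S) ^ 2 := by
    refine Finset.sum_congr rfl fun S _ => ?_
    rw [fc_adjOp]
    ring
  have hspec : ((n:ℝ) - 2 * k + 1) * ∑ S : Finset (Fin n), (fc g S) ^ 2
      ≤ ∑ S : Finset (Fin n), ((n:ℝ) - 2 * (S.card:ℝ)) * (fc g S) ^ 2 := by
    rw [hpars, ← hAg, plancherel g (adjOp g), mul_div_assoc']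
    exact div_le_div_of_nonneg_right h1 hN.le
  -- fourier coefficients of g
  have hc0 : fc g ∅ = 1 := by
    rw [hg, fc_conv, fc_density_empty p hp1]
    have : fc d (∅ : Finset (Fin n)) = 1 := by
      unfold fc
      simp only [chi_empty, mul_one]
      exact hdE
    rw [this, mul_one]
  have hcm : ∀ S : Finset (Fin n), S ≠ ∅ → S.card ≤ k - 1 → fc g S = 0 := by
    intro S hS hcard
    rw [hg, fc_conv, fc_density_vanish (k-1) p hindep S hS hcard, zero_mul]
  -- arithmetic
  set U : Finset (Finset (Fin n)) := Finset.univ with hU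
  set t : ℝ := ∑ S ∈ U.erase ∅, (fc g S) ^ 2 with hts
  have hmem : (∅ : Finset (Fin n)) ∈ U := Finset.mem_univ _
  have hsplit1 : ∑ S : Finset (Fin n), (fc g S) ^ 2 = 1 + t := by
    rw [← Finset.add_sum_erase U _ hmem, hc0]
    norm_num
    exact hts.symm
  have hsplit2 : ∑ S : Finset (Fin n), ((n:ℝ) - 2 * (S.card:ℝ)) * (fc g S) ^ 2
      = (n:ℝ) + ∑ S ∈ U.erase ∅, ((n:ℝ) - 2 * (S.card:ℝ)) * (fc g S) ^ 2 := by
    rw [← Finset.add_sum_erase U _ hmem, hc0]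
    norm_num
  have hbound : ∑ S ∈ U.erase ∅, ((n:ℝ) - 2 * (S.card:ℝ)) * (fc g S) ^ 2
      ≤ ((n:ℝ) - 2 * k) * t := by
    rw [hts, Finset.mul_sum]
    refine Finset.sum_le_sum fun S hS => ?_
    have hSne : S ≠ ∅ := (Finset.mem_erase.1 hS).1
    by_cases hcard : S.card ≤ k - 1
    · rw [hcm S hSne hcard]
      simp
    · have hk1 : k ≤ S.card := by omega
      have hk2 : ((n:ℝ) - 2 * (S.card:ℝ)) ≤ (n:ℝ) - 2 * k := by
        have : (k:ℝ) ≤ S.card := by exact_mod_cast hk1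
        linarith
      exact mul_le_mul_of_nonneg_right hk2 (sq_nonneg _)
  have ht0 : 0 ≤ t := Finset.sum_nonneg fun S _ => sq_nonneg _
  have hkR : 2 * (k:ℝ) ≤ n := by exact_mod_cast hkn
  have hkey : ((n:ℝ) - 2 * k + 1) * (1 + t) ≤ (n:ℝ) + ((n:ℝ) - 2 * k) * t := by
    calc ((n:ℝ) - 2 * k + 1) * (1 + t)
        = ((n:ℝ) - 2 * k + 1) * ∑ S : Finset (Fin n), (fc g S) ^ 2 := by rw [hsplit1]
      _ ≤ ∑ S : Finset (Fin n), ((n:ℝ) - 2 * (S.card:ℝ)) * (fc g S) ^ 2 := hspec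
      _ = (n:ℝ) + ∑ S ∈ U.erase ∅, ((n:ℝ) - 2 * (S.card:ℝ)) * (fc g S) ^ 2 := hsplit2
      _ ≤ (n:ℝ) + ((n:ℝ) - 2 * k) * t := by linarith [hbound]
  have hexp : ((n:ℝ) - 2 * k + 1) * (1 + t)
      = ((n:ℝ) - 2 * k + 1) + ((n:ℝ) - 2 * k) * t + t := by ring
  have htle : t ≤ 2 * (k:ℝ) - 1 := by
    rw [hexp] at hkey
    linarith
  -- conclude
  have hgoal : (∑ x, g x ^ 2) / 2 ^ n ≤ (n:ℝ) := by
    rw [← hpars, hsplit1]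
    linarith
  exact hgoal
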